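/- Let A be an m×m complex matrix and B an n×n complex matrix, with Schur decompositions A = Q*R*Qᴴ and B = U*S*Uᴴ, where Q, U are unitary and R, S are upper triangular. If the Kronecker-sum matrix Iₙ ⊗ₖ A + Bᵀ ⊗ₖ Iₘ is invertible (i.e., the Sylvester equation A*X + X*B = C is nonsingular), then for every index i, the matrix R + S i i • 1 is invertible. -/
import Mathlib

open Matrix Kronecker

theorem stmt_12 {m n : ℕ} (A Q R : Matrix (Fin m) (Fin m) ℂ) (B U S : Matrix (Fin n) (Fin n) ℂ)
    (hQ : Q * Qᴴ = 1) (hU : U * Uᴴ = 1)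
    (hR : ∀ k i : Fin m, i < k → R k i = 0) (hS : ∀ k i : Fin n, i < k → S k i = 0)
    (hA : A = Q * R * Qᴴ) (hB : B = U * S * Uᴴ)
    (hinv : IsUnit ((1 : Matrix (Fin n) (Fin n) ℂ) ⊗ₖ A + Bᵀ ⊗ₖ (1 : Matrix (Fin m) (Fin m) ℂ))) :
    ∀ i : Fin n, IsUnit (R + S i i • (1 : Matrix (Fin m) (Fin m) ℂ)) := by
  intro i
  rw [Matrix.isUnit_iff_isUnit_det, isUnit_iff_ne_zero]
  rcases Nat.eq_zero_or_pos m with hm | hm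
  · subst hm
    simp [Matrix.det_isEmpty]
  set M : Matrix (Fin n × Fin m) (Fin n × Fin m) ℂ :=
    (1 : Matrix (Fin n) (Fin n) ℂ) ⊗ₖ R + Sᵀ ⊗ₖ (1 : Matrix (Fin m) (Fin m) ℂ) with hM
  have hPP : (Uᴴᵀ ⊗ₖ Q) * (Uᵀ ⊗ₖ Qᴴ) = (1 : Matrix (Fin n × Fin m) (Fin n × Fin m) ℂ) := by
    rw [← Matrix.mul_kronecker_mul, ← Matrix.transpose_mul, hU, hQ, Matrix.transpose_one,
      Matrix.one_kronecker_one]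
  have key : (1 : Matrix (Fin n) (Fin n) ℂ) ⊗ₖ A + Bᵀ ⊗ₖ (1 : Matrix (Fin m) (Fin m) ℂ)
      = (Uᴴᵀ ⊗ₖ Q) * M * (Uᵀ ⊗ₖ Qᴴ) := by
    rw [hM, mul_add, add_mul, ← Matrix.mul_kronecker_mul, ← Matrix.mul_kronecker_mul,
      ← Matrix.mul_kronecker_mul, ← Matrix.mul_kronecker_mul]
    congr 1
    · rw [hA, Matrix.mul_one, ← Matrix.transpose_mul, hU, Matrix.transpose_one]
    · rw [hB, Matrix.mul_one, ← Matrix.transpose_mul, ← Matrix.transpose_mul, hQ]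
      ring_nf
      rw [Matrix.mul_assoc]
  have hMdet : M.det ≠ 0 := by
    have h := hinv
    rw [Matrix.isUnit_iff_isUnit_det, isUnit_iff_ne_zero, key] at h
    intro h0
    apply h
    rw [Matrix.det_mul, Matrix.det_mul, h0]
    ring
  set b : Fin n × Fin m → (Fin n)ᵒᵈ := fun p => OrderDual.toDual p.1 with hb
  have hbt : M.BlockTriangular b := by
    intro p q hpq
    have hlt : p.1 < q.1 := hpq
    simp only [hM, Matrix.add_apply, Matrix.kroneckerMap_apply, Matrix.transpose_apply,
      Matrix.one_apply]
    rw [if_neg (ne_of_lt hlt), hS q.1 p.1 hlt]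
    ring
  have hdet := hbt.det
  rw [hdet] at hMdet
  have hmem : OrderDual.toDual i ∈ Finset.univ.image b :=
    Finset.mem_image.mpr ⟨(i, ⟨0, hm⟩), Finset.mem_univ _, rfl⟩
  have hblock : (M.toSquareBlock b (OrderDual.toDual i)).det ≠ 0 :=
    Finset.prod_ne_zero_iff.mp hMdet _ hmem
  let e : Fin m ≃ {p : Fin n × Fin m // b p = OrderDual.toDual i} :=
    { toFun := fun j => ⟨(i, j), rfl⟩
      invFun := fun p => p.1.2
      left_inv := fun j => rfl
      right_inv := fun p => by
        have : p.1.1 = i := OrderDual.toDual_inj.mp p.2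
        ext <;> simp [this] }
  have hsub : (M.toSquareBlock b (OrderDual.toDual i)).submatrix e e
      = R + S i i • (1 : Matrix (Fin m) (Fin m) ℂ) := by
    ext j k
    simp only [e, Equiv.coe_fn_mk, Matrix.submatrix_apply, Matrix.toSquareBlock_def, hM,
      Matrix.add_apply, Matrix.kroneckerMap_apply, Matrix.transpose_apply, Matrix.smul_apply,
      Matrix.one_apply]
    simp [Matrix.one_apply, mul_comm]
  have := Matrix.det_submatrix_equiv_self e (M.toSquareBlock b (OrderDual.toDual i))
  rw [hsub] at this
  rw [this]
  exact hblock
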